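/- Let p be a prime and r = p - 1. Then U_p = Q^p A Q^{-1} A^{-p}, where A = [[1,0],[1,1]], Q = [[1,(p-1)/p],[0,1]], U_p = [[p,0],[0,1/p]]. In particular U_p lies in the subgroup of SL_2(Z[1/p]) generated by A and Q. -/

import Mathlib

abbrev SL2Q := Matrix.SpecialLinearGroup (Fin 2) ℚ

/-- A = [[1,0],[1,1]] -/
def matA : SL2Q := ⟨!![1,0;1,1], by norm_num [Matrix.det_fin_two_of]⟩
/-- B = [[0,1],[-1,0]] -/
def matB : SL2Q := ⟨!![0,1;-1,0], by norm_num [Matrix.det_fin_two_of]⟩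
/-- Q_q = [[1,q],[0,1]] -/
def matQ (q : ℚ) : SL2Q := ⟨!![1,q;0,1], by norm_num [Matrix.det_fin_two_of]⟩
/-- U_p = [[p,0],[0,1/p]] -/
def matU (p : ℚ) (hp : p ≠ 0) : SL2Q := ⟨!![p,0;0,p⁻¹], by rw [Matrix.det_fin_two_of]; field_simp; norm_num⟩
/-- lower unipotent [[1,0],[x,1]] -/
def matL (x : ℚ) : SL2Q := ⟨!![1,0;x,1], by norm_num [Matrix.det_fin_two_of]⟩

lemma matQ_pow (q : ℚ) (n : ℕ) : (matQ q)^n = matQ (n*q) := by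
  induction n with
  | zero => ext i j; simp only [pow_zero, Matrix.SpecialLinearGroup.coe_one]; fin_cases i <;> fin_cases j <;> simp [matQ]
  | succ n ih =>
    rw [pow_succ, ih]
    ext i j
    simp only [Matrix.SpecialLinearGroup.coe_mul, Matrix.SpecialLinearGroup.coe_pow]
    fin_cases i <;> fin_cases j <;>
      simp [matQ, Matrix.SpecialLinearGroup.coe_mul, Matrix.mul_fin_two] <;> ring

lemma matA_pow (n : ℕ) : matA^n = matL n := by
  induction n with
  | zero => ext i j; simp only [pow_zero, Matrix.SpecialLinearGroup.coe_one]; fin_cases i <;> fin_cases j <;> simp [matA, matL]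
  | succ n ih =>
    rw [pow_succ, ih]
    ext i j
    simp only [Matrix.SpecialLinearGroup.coe_mul, Matrix.SpecialLinearGroup.coe_pow]
    fin_cases i <;> fin_cases j <;>
      simp [matA, matL, Matrix.SpecialLinearGroup.coe_mul, Matrix.mul_fin_two] <;> ring

lemma matL_inv (x : ℚ) : (matL x)⁻¹ = matL (-x) := by
  rw [inv_eq_iff_mul_eq_one]
  ext i j
  simp only [Matrix.SpecialLinearGroup.coe_mul, Matrix.SpecialLinearGroup.coe_pow]
  fin_cases i <;> fin_cases j <;>
    simp [matL, Matrix.SpecialLinearGroup.coe_mul, Matrix.mul_fin_two]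

lemma matQ_inv (q : ℚ) : (matQ q)⁻¹ = matQ (-q) := by
  rw [inv_eq_iff_mul_eq_one]
  ext i j
  simp only [Matrix.SpecialLinearGroup.coe_mul, Matrix.SpecialLinearGroup.coe_pow]
  fin_cases i <;> fin_cases j <;>
    simp [matQ, Matrix.SpecialLinearGroup.coe_mul, Matrix.mul_fin_two]

theorem stmt13 (p : ℕ) (hp : p.Prime) :
    matU p (Nat.cast_ne_zero.mpr hp.ne_zero) =
      (matQ (((p:ℚ)-1)/p))^p * matA * (matQ (((p:ℚ)-1)/p))⁻¹ * matA^(-(p:ℤ)) ∧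
    matU p (Nat.cast_ne_zero.mpr hp.ne_zero) ∈ Subgroup.closure {matA, matQ (((p:ℚ)-1)/p)} := by
  have hp0 : (p:ℚ) ≠ 0 := Nat.cast_ne_zero.mpr hp.ne_zero
  have heq : matU p (Nat.cast_ne_zero.mpr hp.ne_zero) =
      (matQ (((p:ℚ)-1)/p))^p * matA * (matQ (((p:ℚ)-1)/p))⁻¹ * matA^(-(p:ℤ)) := by
    rw [zpow_neg, zpow_natCast, matA_pow, matL_inv, matQ_pow, matQ_inv]
    ext i j
    simp only [Matrix.SpecialLinearGroup.coe_mul, Matrix.SpecialLinearGroup.coe_pow]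
    fin_cases i <;> fin_cases j <;>
      simp [matU, matQ, matA, matL, Matrix.SpecialLinearGroup.coe_mul, Matrix.mul_fin_two] <;>
      field_simp <;> ring
  refine ⟨heq, ?_⟩
  rw [heq]
  have hA : matA ∈ Subgroup.closure {matA, matQ (((p:ℚ)-1)/p)} :=
    Subgroup.subset_closure (Set.mem_insert _ _)
  have hQ : matQ (((p:ℚ)-1)/p) ∈ Subgroup.closure {matA, matQ (((p:ℚ)-1)/p)} :=
    Subgroup.subset_closure (Set.mem_insert_of_mem _ rfl)
  exact mul_mem (mul_mem (mul_mem (pow_mem hQ p) hA) (inv_mem hQ)) (zpow_mem hA _)
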